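/- Let A = {A_i}_{i=1}^{N_A} and B = {B_j}_{j=1}^{N_B} be POVMs on the Hilbert space ℂ^N and let ρ be a density operator on ℂ^N. For any two entropic functional pairs (h_A,φ_A) and (h_B,φ_B), the uncertainty relation H_{(h_A,φ_A)}(p(A,ρ)) + H_{(h_B,φ_B)}(p(B,ρ)) ≥ B(c_A,c_B,c_{A,B}) holds, where B(c_A,c_B,c_{A,B}) = D_{(h_A,φ_A)}(γ_A) + D_{(h_B,φ_B)}(γ_B) if γ_{A,B} ≤ γ_A + γ_B, and B(c_A,c_B,c_{A,B}) = min_{θ ∈ [γ_A, γ_{A,B} − γ_B]} ( D_{(h_A,φ_A)}(θ) + D_{(h_B,φ_B)}(γ_{A,B} − θ) ) otherwise. -/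

import Mathlib

open scoped BigOperators ComplexOrder

noncomputable section

/-- An entropic functional pair `(h, φ)` in the sense of Salicrú:
`φ : [0,1] → ℝ` is continuous and strictly concave (resp. strictly convex) with `φ 0 = 0`,
and `h : ℝ → ℝ` is continuous and strictly increasing (resp. strictly decreasing)
with `h (φ 1) = 0`. -/
structure EntropicPair where
  phi : ℝ → ℝ
  h : ℝ → ℝ
  phi_cont : ContinuousOn phi (Set.Icc 0 1)
  h_cont : Continuous h
  phi_zero : phi 0 = 0
  norm_zero : h (phi 1) = 0
  admissible : (StrictConcaveOn ℝ (Set.Icc (0:ℝ) 1) phi ∧ StrictMono h) ∨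
               (StrictConvexOn ℝ (Set.Icc (0:ℝ) 1) phi ∧ StrictAnti h)

/-- `p` is a probability vector. -/
def IsProbVec {ι : Type*} [Fintype ι] (p : ι → ℝ) : Prop :=
  (∀ k, 0 ≤ p k) ∧ ∑ k, p k = 1

/-- The Salicrú `(h,φ)`-entropy of a probability vector. -/
noncomputable def EntropicPair.H (e : EntropicPair) {ι : Type*} [Fintype ι] (p : ι → ℝ) : ℝ :=
  e.h (∑ k, e.phi (p k))

/-- The minimal `(h,φ)`-entropy among probability vectors with maximal component `P`. -/
noncomputable def EntropicPair.Hmin (e : EntropicPair) (P : ℝ) : ℝ :=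
  e.h ((⌊1 / P⌋₊ : ℝ) * e.phi P + e.phi (1 - (⌊1 / P⌋₊ : ℝ) * P))

/-- `D_{(h,φ)}(θ) = h(⌊1/cos²θ⌋ φ(cos²θ) + φ(1 − ⌊1/cos²θ⌋ cos²θ))`. -/
noncomputable def EntropicPair.D (e : EntropicPair) (θ : ℝ) : ℝ :=
  e.Hmin (Real.cos θ ^ 2)

/-- A POVM: a finite family of positive semidefinite matrices summing to the identity. -/
def IsPOVM {N M : ℕ} (A : Fin M → Matrix (Fin N) (Fin N) ℂ) : Prop :=
  (∀ i, (A i).PosSemidef) ∧ ∑ i, A i = 1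

/-- A density operator: positive semidefinite with unit trace. -/
def IsDensityOp {N : ℕ} (ρ : Matrix (Fin N) (Fin N) ℂ) : Prop :=
  ρ.PosSemidef ∧ ρ.trace = 1

/-- The operator (spectral) norm of a matrix, acting on Euclidean space. -/
noncomputable def opNorm {N : ℕ} (M : Matrix (Fin N) (Fin N) ℂ) : ℝ :=
  ‖(Matrix.toEuclideanCLM (𝕜 := ℂ) M : EuclideanSpace ℂ (Fin N) →L[ℂ] EuclideanSpace ℂ (Fin N))‖

/-- The positive semidefinite square root (junk value `0` on non-PSD matrices). -/
noncomputable def psdSqrt {N : ℕ} (M : Matrix (Fin N) (Fin N) ℂ) : Matrix (Fin N) (Fin N) ℂ :=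
  open scoped Classical in
  if h : M.PosSemidef then (h.1.eigenvectorUnitary : Matrix (Fin N) (Fin N) ℂ) *
    Matrix.diagonal ((↑) ∘ Real.sqrt ∘ h.1.eigenvalues) *
    star (h.1.eigenvectorUnitary : Matrix (Fin N) (Fin N) ℂ) else 0

/-- Outcome probabilities `p_i(A,ρ) = Tr (A_i ρ)`. -/
noncomputable def probVec {N M : ℕ} (A : Fin M → Matrix (Fin N) (Fin N) ℂ)
    (ρ : Matrix (Fin N) (Fin N) ℂ) : Fin M → ℝ :=
  fun i => ((A i * ρ).trace).re

/-- Overlap `c_A = max_i ‖√A_i‖`. -/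
noncomputable def covA {N M : ℕ} (A : Fin M → Matrix (Fin N) (Fin N) ℂ) : ℝ :=
  ⨆ i, opNorm (psdSqrt (A i))

/-- Overlap `c_{A,B} = max_{i,j} ‖√A_i √B_j‖`. -/
noncomputable def covAB {N Ma Mb : ℕ} (A : Fin Ma → Matrix (Fin N) (Fin N) ℂ)
    (B : Fin Mb → Matrix (Fin N) (Fin N) ℂ) : ℝ :=
  ⨆ i, ⨆ j, opNorm (psdSqrt (A i) * psdSqrt (B j))


/-! ### Auxiliary lemmas -/

section Aux

open Finset

/-- Transfer lemma for concave functions. -/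
lemma concave_transfer {φ : ℝ → ℝ} (hφ : ConcaveOn ℝ (Set.Icc (0:ℝ) 1) φ)
    {a b c d : ℝ} (ha : a ∈ Set.Icc (0:ℝ) 1) (hb : b ∈ Set.Icc (0:ℝ) 1)
    (hac : a ≤ c) (had : a ≤ d) (hsum : a + b = c + d) :
    φ a + φ b ≤ φ c + φ d := by
  have hcb : c ≤ b := by linarith
  have hdb : d ≤ b := by linarith
  rcases eq_or_lt_of_le (hac.trans hcb) with h | h
  · have hca : c = a := le_antisymm (by linarith) hac
    have hda : d = a := le_antisymm (by linarith) had
    rw [hca, hda, ← h]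
  · set lam := (b - c) / (b - a) with hlam
    set mu := (c - a) / (b - a) with hmu
    have hba : 0 < b - a := by linarith
    have hl0 : 0 ≤ lam := div_nonneg (by linarith) hba.le
    have hm0 : 0 ≤ mu := div_nonneg (by linarith) hba.le
    have hne : b - a ≠ 0 := ne_of_gt hba
    have hlm : lam + mu = 1 := by rw [hlam, hmu]; field_simp; ring
    have hc : lam * a + mu * b = c := by
      rw [hlam, hmu]; field_simp; ring
    have hd : mu * a + lam * b = d := by
      have hdd : d = a + b - c := by linarith
      rw [hdd, hlam, hmu]; field_simp; ring
    have h1 := hφ.2 ha hb hl0 hm0 hlm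
    have h2 := hφ.2 ha hb hm0 hl0 (by linarith)
    rw [smul_eq_mul, smul_eq_mul, smul_eq_mul, smul_eq_mul, hc] at h1
    rw [smul_eq_mul, smul_eq_mul, smul_eq_mul, smul_eq_mul, hd] at h2
    have hsum2 : lam * φ a + mu * φ b + (mu * φ a + lam * φ b) = (lam + mu) * (φ a + φ b) := by
      ring
    rw [hlm, one_mul] at hsum2
    linarith

/-- Key induction: sum of a concave `φ` over a subprobability vector dominated by `P`
is at least the value on the "chunky" configuration. -/
lemma concave_sum_chunk {ι : Type*} [Fintype ι] {φ : ℝ → ℝ}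
    (hφ : ConcaveOn ℝ (Set.Icc (0:ℝ) 1) φ) (hφ0 : φ 0 = 0)
    {P : ℝ} (hP0 : 0 < P) (hP1 : P ≤ 1) {p : ι → ℝ}
    (hp0 : ∀ k, 0 ≤ p k) (hpP : ∀ k, p k ≤ P) :
    ∀ s : Finset ι, s.sum p ≤ 1 →
      (⌊s.sum p / P⌋₊ : ℝ) * φ P + φ (s.sum p - (⌊s.sum p / P⌋₊ : ℝ) * P) ≤
        s.sum fun k => φ (p k) := by
  intro s
  induction s using Finset.cons_induction with
  | empty => intro _; simp [hφ0]
  | cons k s hk ih =>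
    intro hsum1
    rw [Finset.sum_cons] at hsum1 ⊢
    set x := p k with hx
    set t := s.sum p with ht
    have hx0 : 0 ≤ x := hp0 k
    have hxP : x ≤ P := hpP k
    have ht0 : 0 ≤ t := Finset.sum_nonneg fun k _ => hp0 k
    have ht1 : t ≤ 1 := by linarith
    have hIH := ih ht1
    set n := ⌊t / P⌋₊ with hn
    have hnP : (n : ℝ) * P ≤ t :=
      (le_div_iff₀ hP0).mp (Nat.floor_le (div_nonneg ht0 hP0.le))
    have hrP : t - (n : ℝ) * P < P := by
      have := Nat.lt_floor_add_one (t / P)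
      have h2 : t / P < (n : ℝ) + 1 := by exact_mod_cast this
      have := (div_lt_iff₀ hP0).mp h2
      linarith
    set r := t - (n : ℝ) * P with hr
    have hr0 : 0 ≤ r := by simp [hr]; linarith
    -- the sum including x
    have key : (⌊(x + t) / P⌋₊ : ℝ) * φ P + φ (x + t - (⌊(x + t) / P⌋₊ : ℝ) * P) ≤
        φ x + ((n : ℝ) * φ P + φ r) := by
      rcases lt_or_ge (x + r) P with hc | hc
      · have hfl : ⌊(x + t) / P⌋₊ = n := by
          rw [Nat.floor_eq_iff (div_nonneg (by linarith) hP0.le)]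
          constructor
          · rw [le_div_iff₀ hP0, mul_comm]; linarith
          · rw [div_lt_iff₀ hP0]; push_cast; linarith
        rw [hfl]
        have harg : x + t - (n : ℝ) * P = x + r := by rw [hr]; ring
        rw [harg]
        have htr : φ 0 + φ (x + r) ≤ φ x + φ r := by
          apply concave_transfer hφ (Set.mem_Icc.mpr (by norm_num))
            (Set.mem_Icc.mpr ⟨by positivity, by linarith⟩) hx0 hr0 (by ring)
        linarith
      · have hfl : ⌊(x + t) / P⌋₊ = n + 1 := by
          rw [Nat.floor_eq_iff (div_nonneg (by linarith) hP0.le)]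
          constructor
          · rw [le_div_iff₀ hP0]; push_cast; linarith
          · rw [div_lt_iff₀ hP0]; push_cast; linarith
        rw [hfl]
        have harg : x + t - ((n : ℕ) + 1 : ℝ) * P = x + r - P := by rw [hr]; ring
        push_cast
        have harg' : x + t - ((n : ℝ) + 1) * P = x + r - P := by rw [hr]; ring
        rw [harg']
        have htr : φ (x + r - P) + φ P ≤ φ r + φ x := by
          exact concave_transfer hφ (Set.mem_Icc.mpr ⟨by linarith, by linarith⟩)
            (Set.mem_Icc.mpr ⟨by linarith, by linarith⟩) (by linarith) (by linarith) (by ring)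
        linarith
    calc (⌊(x + t) / P⌋₊ : ℝ) * φ P + φ (x + t - (⌊(x + t) / P⌋₊ : ℝ) * P)
        ≤ φ x + ((n : ℝ) * φ P + φ r) := key
      _ ≤ φ x + s.sum fun k => φ (p k) := by linarith
      _ = (Finset.cons k s hk).sum fun k => φ (p k) := by rw [Finset.sum_cons, hx]


/-- The floor `⌊1/P⌋₊` facts for `0 < P ≤ 1`. -/
lemma floor_inv_facts {P : ℝ} (hP0 : 0 < P) (hP1 : P ≤ 1) :
    (⌊1 / P⌋₊ : ℝ) * P ≤ 1 ∧ 1 < ((⌊1 / P⌋₊ : ℝ) + 1) * P := by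
  constructor
  · have h := Nat.floor_le (le_of_lt (div_pos one_pos hP0))
    calc (⌊1 / P⌋₊ : ℝ) * P ≤ (1 / P) * P := by
          exact mul_le_mul_of_nonneg_right h hP0.le
      _ = 1 := by field_simp
  · have h := Nat.lt_floor_add_one (1 / P)
    have h2 : 1 / P < (⌊1 / P⌋₊ : ℝ) + 1 := by exact_mod_cast h
    calc (1 : ℝ) = (1 / P) * P := by field_simp
      _ < ((⌊1 / P⌋₊ : ℝ) + 1) * P := by
          exact mul_lt_mul_of_pos_right h2 hP0

/-- The chunky vector achieving `Hmin P`. -/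
noncomputable def chunkVec (P : ℝ) : Fin (⌊1 / P⌋₊ + 1) → ℝ :=
  fun k => if (k : ℕ) < ⌊1 / P⌋₊ then P else 1 - (⌊1 / P⌋₊ : ℝ) * P

lemma chunkVec_sum (P : ℝ) (f : ℝ → ℝ) :
    ∑ k, f (chunkVec P k) = (⌊1 / P⌋₊ : ℝ) * f P + f (1 - (⌊1 / P⌋₊ : ℝ) * P) := by
  rw [Fin.sum_univ_castSucc]
  have h1 : ∀ i : Fin ⌊1 / P⌋₊, f (chunkVec P i.castSucc) = f P := by
    intro i
    have hi : ((i.castSucc : ℕ)) < ⌊1 / P⌋₊ := by simpa using i.is_lt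
    simp only [chunkVec, if_pos hi]
  have h2 : f (chunkVec P (Fin.last ⌊1 / P⌋₊)) = f (1 - (⌊1 / P⌋₊ : ℝ) * P) := by
    simp [chunkVec, Fin.last]
  rw [Finset.sum_congr rfl (fun i _ => h1 i), h2, Finset.sum_const]
  simp [mul_comm]

lemma chunkVec_isProbVec {P : ℝ} (hP0 : 0 < P) (hP1 : P ≤ 1) :
    IsProbVec (chunkVec P) := by
  obtain ⟨hf1, hf2⟩ := floor_inv_facts hP0 hP1
  constructor
  · intro k
    unfold chunkVec
    split
    · exact hP0.le
    · linarith
  · have := chunkVec_sum P id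
    simpa using this

lemma chunkVec_le {P P' : ℝ} (hP0 : 0 < P) (hP1 : P ≤ 1) (hPP' : P ≤ P') :
    ∀ k, chunkVec P k ≤ P' := by
  obtain ⟨hf1, hf2⟩ := floor_inv_facts hP0 hP1
  intro k
  unfold chunkVec
  split
  · exact hPP'
  · nlinarith

/-- Minimality of `Hmin`: any probability vector with entries at most `P` has entropy
at least `Hmin P`. -/
lemma EntropicPair.Hmin_le_H (e : EntropicPair) {ι : Type*} [Fintype ι] {p : ι → ℝ}
    (hp : IsProbVec p) {P : ℝ} (hP0 : 0 < P) (hP1 : P ≤ 1) (hpP : ∀ k, p k ≤ P) :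
    e.Hmin P ≤ e.H p := by
  obtain ⟨hp0, hp1⟩ := hp
  rcases e.admissible with ⟨hconc, hmono⟩ | ⟨hconv, hanti⟩
  · have key := concave_sum_chunk hconc.concaveOn e.phi_zero hP0 hP1 hp0 hpP
      Finset.univ (le_of_eq hp1)
    rw [hp1] at key
    exact hmono.monotone key
  · have hconc : ConcaveOn ℝ (Set.Icc (0:ℝ) 1) (-e.phi) := hconv.convexOn.neg
    have key := concave_sum_chunk hconc (by simp [e.phi_zero]) hP0 hP1 hp0 hpP
      Finset.univ (le_of_eq hp1)
    rw [hp1] at key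
    simp only [Pi.neg_apply, Finset.sum_neg_distrib, mul_neg] at key
    exact hanti.antitone (by linarith)

lemma EntropicPair.Hmin_eq_H_chunk (e : EntropicPair) {P : ℝ} :
    e.Hmin P = e.H (chunkVec P) := by
  unfold EntropicPair.Hmin EntropicPair.H
  rw [chunkVec_sum P e.phi]

/-- `Hmin` is antitone in the bound `P`. -/
lemma EntropicPair.Hmin_mono (e : EntropicPair) {P P' : ℝ} (hP0 : 0 < P)
    (hPP' : P ≤ P') (hP1 : P' ≤ 1) :
    e.Hmin P' ≤ e.Hmin P := by
  rw [e.Hmin_eq_H_chunk (P := P)]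
  exact e.Hmin_le_H (chunkVec_isProbVec hP0 (hPP'.trans hP1))
    (lt_of_lt_of_le hP0 hPP') hP1 (chunkVec_le hP0 (hPP'.trans hP1) hPP')

lemma EntropicPair.Hmin_one (e : EntropicPair) : e.Hmin 1 = 0 := by
  unfold EntropicPair.Hmin
  norm_num [e.phi_zero, e.norm_zero]

/-- Entropies are nonnegative. -/
lemma EntropicPair.H_nonneg (e : EntropicPair) {ι : Type*} [Fintype ι] {p : ι → ℝ}
    (hp : IsProbVec p) : 0 ≤ e.H p := by
  have := e.Hmin_le_H hp one_pos le_rfl (fun k => by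
    rcases hp with ⟨hp0, hp1⟩
    calc p k ≤ ∑ j, p j := Finset.single_le_sum (fun j _ => hp0 j) (Finset.mem_univ k)
      _ = 1 := hp1)
  rw [e.Hmin_one] at this
  exact this

lemma EntropicPair.Hmin_nonneg (e : EntropicPair) {P : ℝ} (hP0 : 0 ≤ P) (hP1 : P ≤ 1) :
    0 ≤ e.Hmin P := by
  rcases eq_or_lt_of_le hP0 with h | h
  · unfold EntropicPair.Hmin
    rw [← h]
    norm_num [e.phi_zero, e.norm_zero]
  · rw [e.Hmin_eq_H_chunk]
    exact e.H_nonneg (chunkVec_isProbVec h hP1)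

lemma EntropicPair.D_nonneg (e : EntropicPair) (θ : ℝ) : 0 ≤ e.D θ :=
  e.Hmin_nonneg (sq_nonneg _) (Real.cos_sq_le_one θ)

/-- `arccos` is globally antitone. -/
lemma arccos_antitone {x y : ℝ} (h : x ≤ y) : Real.arccos y ≤ Real.arccos x := by
  rw [Real.arccos_eq_pi_div_two_sub_arcsin, Real.arccos_eq_pi_div_two_sub_arcsin]
  have := Real.monotone_arcsin h
  linarith

end Aux



/-! ### Matrix and Hilbert–Schmidt auxiliary lemmas -/

section MatrixAux

open Matrix
open scoped Matrix.Norms.L2Operator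

variable {N : ℕ}

lemma opNorm_eq_norm (M : Matrix (Fin N) (Fin N) ℂ) : opNorm M = ‖M‖ := rfl

lemma psdSqrt_eq {M : Matrix (Fin N) (Fin N) ℂ} (hM : M.PosSemidef) :
    psdSqrt M = (hM.1.eigenvectorUnitary : Matrix (Fin N) (Fin N) ℂ) *
      Matrix.diagonal ((↑) ∘ Real.sqrt ∘ hM.1.eigenvalues) *
      star (hM.1.eigenvectorUnitary : Matrix (Fin N) (Fin N) ℂ) := by rw [psdSqrt, dif_pos hM]

lemma psdSqrt_posSemidef {M : Matrix (Fin N) (Fin N) ℂ} (hM : M.PosSemidef) :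
    (psdSqrt M).PosSemidef := by
  rw [psdSqrt_eq hM, Matrix.star_eq_conjTranspose]
  exact (Matrix.PosSemidef.diagonal (fun i => by
    simp only [Pi.zero_apply, Function.comp_apply]
    exact_mod_cast Real.sqrt_nonneg _)).mul_mul_conjTranspose_same _

lemma psdSqrt_hermitian {M : Matrix (Fin N) (Fin N) ℂ} (hM : M.PosSemidef) :
    (psdSqrt M)ᴴ = psdSqrt M := (psdSqrt_posSemidef hM).isHermitian

lemma psdSqrt_mul_self {M : Matrix (Fin N) (Fin N) ℂ} (hM : M.PosSemidef) :
    psdSqrt M * psdSqrt M = M := by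
  rw [psdSqrt_eq hM]
  have hU : star (hM.1.eigenvectorUnitary : Matrix (Fin N) (Fin N) ℂ) *
      (hM.1.eigenvectorUnitary : Matrix (Fin N) (Fin N) ℂ) = 1 := hM.1.eigenvectorUnitary.2.1
  conv_rhs => rw [hM.1.spectral_theorem, Unitary.conjStarAlgAut_apply]
  have h1 : ∀ (U D : Matrix (Fin N) (Fin N) ℂ), U * D * star U * (U * D * star U)
      = U * (D * (star U * U) * D) * star U := by intro U D; simp only [mul_assoc]
  have hd : Matrix.diagonal (((↑) ∘ Real.sqrt ∘ hM.1.eigenvalues : Fin N → ℂ)) *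
      Matrix.diagonal (((↑) ∘ Real.sqrt ∘ hM.1.eigenvalues : Fin N → ℂ))
      = Matrix.diagonal (RCLike.ofReal ∘ hM.1.eigenvalues) := by
    rw [Matrix.diagonal_mul_diagonal]
    congr 1
    funext i
    simp only [Function.comp_apply]
    rw [← Complex.ofReal_mul, Real.mul_self_sqrt (hM.eigenvalues_nonneg i)]
    rfl
  rw [h1, hU, mul_one, hd]

/-- The Hilbert–Schmidt "vectorization" of a matrix. -/
noncomputable def mvec (X : Matrix (Fin N) (Fin N) ℂ) : EuclideanSpace ℂ (Fin N × Fin N) :=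
  (WithLp.equiv 2 _).symm (fun p => X p.1 p.2)

lemma mvec_inner (X Y : Matrix (Fin N) (Fin N) ℂ) :
    (inner ℂ (mvec X) (mvec Y) : ℂ) = (Xᴴ * Y).trace := by
  simp only [mvec, PiLp.inner_apply, RCLike.inner_apply, WithLp.equiv_symm_apply, PiLp.toLp_apply]
  rw [Matrix.trace]
  simp only [Matrix.diag_apply, Matrix.mul_apply, Matrix.conjTranspose_apply]
  rw [Fintype.sum_prod_type, Finset.sum_comm]
  refine Finset.sum_congr rfl fun i _ => Finset.sum_congr rfl fun j _ => ?_
  exact mul_comm _ _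

lemma mvec_norm_sq (X : Matrix (Fin N) (Fin N) ℂ) :
    ‖mvec X‖ ^ 2 = ((Xᴴ * X).trace).re := by
  rw [← mvec_inner]
  have := inner_self_eq_norm_sq (𝕜 := ℂ) (mvec X)
  simpa using this.symm

lemma euclidean_norm_sq {ι : Type*} [Fintype ι] (y : EuclideanSpace ℂ ι) :
    ‖y‖ ^ 2 = ∑ i, ‖y i‖ ^ 2 := by
  rw [EuclideanSpace.norm_eq, Real.sq_sqrt]
  positivity

lemma mvec_norm_sq_sum (Z : Matrix (Fin N) (Fin N) ℂ) :
    ‖mvec Z‖ ^ 2 = ∑ j, ∑ i, ‖Z i j‖ ^ 2 := by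
  rw [euclidean_norm_sq, Fintype.sum_prod_type, Finset.sum_comm]
  rfl

/-- The crucial norm bound: left multiplication by `m` on the Hilbert–Schmidt space is
bounded by the operator norm of `m`. -/
lemma mvec_mul_le (m Z : Matrix (Fin N) (Fin N) ℂ) :
    ‖mvec (m * Z)‖ ≤ ‖m‖ * ‖mvec Z‖ := by
  have key : ‖mvec (m * Z)‖ ^ 2 ≤ (‖m‖ * ‖mvec Z‖) ^ 2 := by
    rw [mvec_norm_sq_sum, mul_pow, mvec_norm_sq_sum, Finset.mul_sum]
    apply Finset.sum_le_sum
    intro j _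
    set c : EuclideanSpace ℂ (Fin N) := (WithLp.equiv 2 (Fin N → ℂ)).symm (fun i => Z i j)
      with hc
    have hcn : ∑ i, ‖Z i j‖ ^ 2 = ‖c‖ ^ 2 := by rw [euclidean_norm_sq]; rfl
    have hnorm : ∑ i, ‖(m * Z) i j‖ ^ 2 =
        ‖(EuclideanSpace.equiv (Fin N) ℂ).symm (m *ᵥ c)‖ ^ 2 := by
      rw [euclidean_norm_sq]
      exact Finset.sum_congr rfl fun i _ => rfl
    rw [hnorm, hcn]
    have hb := Matrix.l2_opNorm_mulVec m c
    have h0 : (0:ℝ) ≤ ‖m‖ * ‖c‖ := by positivity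
    nlinarith [norm_nonneg ((EuclideanSpace.equiv (Fin N) ℂ).symm (m *ᵥ c))]
  have ha := norm_nonneg (mvec (m * Z))
  have hb : (0:ℝ) ≤ ‖m‖ * ‖mvec Z‖ := mul_nonneg (norm_nonneg m) (norm_nonneg (mvec Z))
  calc ‖mvec (m * Z)‖ = Real.sqrt (‖mvec (m * Z)‖ ^ 2) := (Real.sqrt_sq ha).symm
    _ ≤ Real.sqrt ((‖m‖ * ‖mvec Z‖) ^ 2) := Real.sqrt_le_sqrt key
    _ = ‖m‖ * ‖mvec Z‖ := Real.sqrt_sq hb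

lemma trace_conj_re_nonneg {M : Matrix (Fin N) (Fin N) ℂ} (X : Matrix (Fin N) (Fin N) ℂ)
    (hM : M.PosSemidef) : 0 ≤ ((Xᴴ * M * X).trace).re := by
  have h : (psdSqrt M * X)ᴴ * (psdSqrt M * X) = Xᴴ * M * X := by
    rw [Matrix.conjTranspose_mul, psdSqrt_hermitian hM, mul_assoc,
      ← mul_assoc (psdSqrt M), psdSqrt_mul_self hM, ← mul_assoc]
  rw [← h, ← mvec_norm_sq]
  positivity

lemma mvec_inner_sigma (X Y σ : Matrix (Fin N) (Fin N) ℂ) (hσ : σᴴ = σ) :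
    (inner ℂ (mvec (X * σ)) (mvec (Y * σ)) : ℂ) = (Xᴴ * Y * (σ * σ)).trace := by
  rw [mvec_inner, Matrix.conjTranspose_mul, hσ, mul_assoc, Matrix.trace_mul_comm]
  congr 1
  simp only [mul_assoc]

/-- Operator norm of a positive semidefinite contraction is at most one. -/
lemma psd_inner_nonneg {M : Matrix (Fin N) (Fin N) ℂ} (hM : M.PosSemidef)
    (x : EuclideanSpace ℂ (Fin N)) :
    0 ≤ (inner ℂ x ((Matrix.toEuclideanCLM (𝕜 := ℂ) M) x) : ℂ).re := by
  set s := psdSqrt M with hs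
  set T := Matrix.toEuclideanCLM (𝕜 := ℂ) s with hT
  have hMs : M = s * s := (psdSqrt_mul_self hM).symm
  have hstar : star T = T := by
    rw [hT, ← map_star]
    congr 1
    rw [Matrix.star_eq_conjTranspose, psdSqrt_hermitian hM]
  have happ : (Matrix.toEuclideanCLM (𝕜 := ℂ) M) x = T (T x) := by
    rw [hMs, _root_.map_mul]; rfl
  rw [happ]
  have hTadj : ContinuousLinearMap.adjoint T = T := by
    rw [← ContinuousLinearMap.star_eq_adjoint, hstar]
  have hadj : (inner ℂ x (T (T x)) : ℂ) = (inner ℂ (T x) (T x) : ℂ) := by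
    rw [← ContinuousLinearMap.adjoint_inner_left T, hTadj]
  rw [hadj]
  have := inner_self_eq_norm_sq (𝕜 := ℂ) (T x)
  simp only [RCLike.re_to_complex] at this
  rw [this]
  positivity

lemma opNorm_le_one_of_contraction {M : Matrix (Fin N) (Fin N) ℂ} (hM : M.PosSemidef)
    (hM1 : (1 - M * M).PosSemidef) : ‖M‖ ≤ 1 := by
  rw [Matrix.cstar_norm_def]
  apply ContinuousLinearMap.opNorm_le_bound _ zero_le_one
  intro x
  rw [one_mul]
  set T := Matrix.toEuclideanCLM (𝕜 := ℂ) M with hT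
  have hstar : star T = T := by
    rw [hT, ← map_star]
    congr 1
    rw [Matrix.star_eq_conjTranspose, hM.isHermitian]
  have hsq : ‖T x‖ ^ 2 = (inner ℂ x ((Matrix.toEuclideanCLM (𝕜 := ℂ) (M * M)) x) : ℂ).re := by
    have hTadj : ContinuousLinearMap.adjoint T = T := by
      rw [← ContinuousLinearMap.star_eq_adjoint, hstar]
    have h1 : (inner ℂ x ((Matrix.toEuclideanCLM (𝕜 := ℂ) (M * M)) x) : ℂ)
        = (inner ℂ (T x) (T x) : ℂ) := by
      rw [_root_.map_mul]
      have h2 : (Matrix.toEuclideanCLM (𝕜 := ℂ) M * Matrix.toEuclideanCLM (𝕜 := ℂ) M) x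
          = T (T x) := rfl
      rw [h2, ← ContinuousLinearMap.adjoint_inner_left T, hTadj]
    have h2 := inner_self_eq_norm_sq (𝕜 := ℂ) (T x)
    simp only [RCLike.re_to_complex] at h2
    rw [← h2, h1]
  have hx2 : ‖x‖ ^ 2 = (inner ℂ x x : ℂ).re := by
    have h2 := inner_self_eq_norm_sq (𝕜 := ℂ) x
    simp only [RCLike.re_to_complex] at h2
    rw [h2]
  have hkey : (inner ℂ x ((Matrix.toEuclideanCLM (𝕜 := ℂ) (M * M)) x) : ℂ).re ≤ ‖x‖ ^ 2 := by
    have := psd_inner_nonneg hM1 x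
    have hone : (Matrix.toEuclideanCLM (𝕜 := ℂ) (1 - M * M)) x
        = x - (Matrix.toEuclideanCLM (𝕜 := ℂ) (M * M)) x := by
      rw [map_sub, _root_.map_one]; rfl
    rw [hone, inner_sub_right] at this
    rw [hx2]
    have hre : ((inner ℂ x x : ℂ) - inner ℂ x ((Matrix.toEuclideanCLM (𝕜 := ℂ) (M * M)) x)).re
        = (inner ℂ x x : ℂ).re - (inner ℂ x ((Matrix.toEuclideanCLM (𝕜 := ℂ) (M * M)) x) : ℂ).re :=
      Complex.sub_re _ _
    rw [hre] at this
    linarith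
  have : ‖T x‖ ^ 2 ≤ ‖x‖ ^ 2 := by rw [hsq]; exact hkey
  nlinarith [norm_nonneg (T x), norm_nonneg x]



lemma trace_eq_normsq {Mm ρ : Matrix (Fin N) (Fin N) ℂ} (hM : Mm.PosSemidef)
    (hρ : ρ.PosSemidef) :
    (Mm * ρ).trace = ((‖mvec (psdSqrt Mm * psdSqrt ρ)‖ : ℝ) : ℂ) ^ 2 := by
  have h := mvec_inner_sigma (psdSqrt Mm) (psdSqrt Mm) (psdSqrt ρ) (psdSqrt_hermitian hρ)
  rw [psdSqrt_hermitian hM, psdSqrt_mul_self hM, psdSqrt_mul_self hρ] at h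
  rw [← h, inner_self_eq_norm_sq_to_K]
  rfl

lemma trace_re_eq_normsq {Mm ρ : Matrix (Fin N) (Fin N) ℂ} (hM : Mm.PosSemidef)
    (hρ : ρ.PosSemidef) :
    ((Mm * ρ).trace).re = ‖mvec (psdSqrt Mm * psdSqrt ρ)‖ ^ 2 := by
  rw [trace_eq_normsq hM hρ, ← Complex.ofReal_pow, Complex.ofReal_re]

lemma trace_mul_psd_re_nonneg {Mm ρ : Matrix (Fin N) (Fin N) ℂ} (hM : Mm.PosSemidef)
    (hρ : ρ.PosSemidef) : 0 ≤ ((Mm * ρ).trace).re := by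
  have h := trace_conj_re_nonneg (psdSqrt ρ) hM
  have heq : ((psdSqrt ρ)ᴴ * Mm * psdSqrt ρ).trace = (Mm * ρ).trace := by
    rw [psdSqrt_hermitian hρ, Matrix.trace_mul_comm, ← mul_assoc, psdSqrt_mul_self hρ,
      Matrix.trace_mul_comm]
  rwa [heq] at h

lemma mvec_sigma_norm {ρ : Matrix (Fin N) (Fin N) ℂ} (hρ : ρ.PosSemidef)
    (htr : ρ.trace = 1) : ‖mvec (psdSqrt ρ)‖ = 1 := by
  have h : ‖mvec (psdSqrt ρ)‖ ^ 2 = 1 := by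
    rw [mvec_norm_sq, psdSqrt_hermitian hρ, psdSqrt_mul_self hρ, htr]
    simp
  nlinarith [norm_nonneg (mvec (psdSqrt ρ))]

/-- `A - A²` is PSD for a PSD contraction. -/
lemma sub_sq_posSemidef {Am : Matrix (Fin N) (Fin N) ℂ} (hAm : Am.PosSemidef)
    (hA1 : (1 - Am).PosSemidef) : (Am - Am * Am).PosSemidef := by
  have h := hA1.conjTranspose_mul_mul_same (psdSqrt Am)
  have heq : (psdSqrt Am)ᴴ * (1 - Am) * psdSqrt Am = Am - Am * Am := by
    rw [psdSqrt_hermitian hAm]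
    set a := psdSqrt Am with ha
    have haa : a * a = Am := psdSqrt_mul_self hAm
    rw [← haa]
    noncomm_ring
  rwa [heq] at h

/-- Abstract inner-product estimate used in the Landau–Pollak step. -/
lemma lp_inner_core {E : Type*} [NormedAddCommGroup E] [InnerProductSpace ℂ E]
    {ψ X Y : E} {p q : ℝ} (hψ : ‖ψ‖ = 1)
    (hpX : (inner ℂ ψ X : ℂ) = (p : ℂ)) (hXn : ‖X‖ ^ 2 ≤ p)
    (hqY : (inner ℂ ψ Y : ℂ) = (q : ℂ)) (hYn : ‖Y‖ ^ 2 ≤ q) :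
    p * q - Real.sqrt (p * (1 - p)) * Real.sqrt (q * (1 - q)) ≤ (inner ℂ X Y : ℂ).re := by
  have hp0 : 0 ≤ p := le_trans (sq_nonneg ‖X‖) hXn
  have hq0 : 0 ≤ q := le_trans (sq_nonneg ‖Y‖) hYn
  set x := X - (p : ℂ) • ψ with hx
  set y := Y - (q : ℂ) • ψ with hy
  have hψψ : (inner ℂ ψ ψ : ℂ) = 1 := by
    rw [inner_self_eq_norm_sq_to_K, hψ]; norm_num
  have hXψ : (inner ℂ X ψ : ℂ) = (p : ℂ) := by
    rw [← inner_conj_symm, hpX, Complex.conj_ofReal]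
  have hYψ : (inner ℂ Y ψ : ℂ) = (q : ℂ) := by
    rw [← inner_conj_symm, hqY, Complex.conj_ofReal]
  have hxn : ‖x‖ ^ 2 = ‖X‖ ^ 2 - p ^ 2 := by
    have hxx : (inner ℂ x x : ℂ) = (inner ℂ X X : ℂ) - ((p : ℂ) * (p : ℂ)) := by
      rw [hx]
      simp only [inner_sub_left, inner_sub_right, inner_smul_left, inner_smul_right,
        hψψ, hpX, hXψ, Complex.conj_ofReal]
      ring
    have h1 := inner_self_eq_norm_sq (𝕜 := ℂ) x
    have h2 := inner_self_eq_norm_sq (𝕜 := ℂ) X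
    simp only [RCLike.re_to_complex] at h1 h2
    have := congrArg Complex.re hxx
    simp only [Complex.sub_re, Complex.mul_re, Complex.ofReal_re, Complex.ofReal_im,
      mul_zero, sub_zero] at this
    rw [h1, h2] at this
    rw [this]; ring
  have hyn : ‖y‖ ^ 2 = ‖Y‖ ^ 2 - q ^ 2 := by
    have hyy : (inner ℂ y y : ℂ) = (inner ℂ Y Y : ℂ) - ((q : ℂ) * (q : ℂ)) := by
      rw [hy]
      simp only [inner_sub_left, inner_sub_right, inner_smul_left, inner_smul_right,
        hψψ, hqY, hYψ, Complex.conj_ofReal]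
      ring
    have h1 := inner_self_eq_norm_sq (𝕜 := ℂ) y
    have h2 := inner_self_eq_norm_sq (𝕜 := ℂ) Y
    simp only [RCLike.re_to_complex] at h1 h2
    have := congrArg Complex.re hyy
    simp only [Complex.sub_re, Complex.mul_re, Complex.ofReal_re, Complex.ofReal_im,
      mul_zero, sub_zero] at this
    rw [h1, h2] at this
    rw [this]; ring
  have hXY : (inner ℂ X Y : ℂ) = (inner ℂ x y : ℂ) + ((p : ℂ) * (q : ℂ)) := by
    have hXx : X = x + (p : ℂ) • ψ := by rw [hx]; abel
    have hYy : Y = y + (q : ℂ) • ψ := by rw [hy]; abel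
    have hψx : (inner ℂ ψ x : ℂ) = 0 := by
      rw [hx, inner_sub_right, inner_smul_right, hψψ, hpX]; ring
    have hψy : (inner ℂ ψ y : ℂ) = 0 := by
      rw [hy, inner_sub_right, inner_smul_right, hψψ, hqY]; ring
    have hxψ : (inner ℂ x ψ : ℂ) = 0 := by
      rw [← inner_conj_symm, hψx]; simp
    have hyψ : (inner ℂ y ψ : ℂ) = 0 := by
      rw [← inner_conj_symm, hψy]; simp
    conv_lhs => rw [hXx, hYy]
    simp only [inner_add_left, inner_add_right, inner_smul_left, inner_smul_right,
      hψψ, hψy, hxψ, Complex.conj_ofReal]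
    ring
  have hre : (inner ℂ X Y : ℂ).re = (inner ℂ x y : ℂ).re + p * q := by
    have := congrArg Complex.re hXY
    simpa [Complex.add_re, Complex.mul_re] using this
  have hcs : |(inner ℂ x y : ℂ).re| ≤ ‖x‖ * ‖y‖ := by
    calc |(inner ℂ x y : ℂ).re| ≤ ‖(inner ℂ x y : ℂ)‖ := Complex.abs_re_le_norm _
      _ ≤ ‖x‖ * ‖y‖ := by
          have := norm_inner_le_norm (𝕜 := ℂ) x y
          simpa using this
  have hxb : ‖x‖ ≤ Real.sqrt (p * (1 - p)) := by
    have h1 : ‖x‖ ^ 2 ≤ p * (1 - p) := by rw [hxn]; nlinarith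
    calc ‖x‖ = Real.sqrt (‖x‖ ^ 2) := (Real.sqrt_sq (norm_nonneg x)).symm
      _ ≤ Real.sqrt (p * (1 - p)) := Real.sqrt_le_sqrt h1
  have hyb : ‖y‖ ≤ Real.sqrt (q * (1 - q)) := by
    have h1 : ‖y‖ ^ 2 ≤ q * (1 - q) := by rw [hyn]; nlinarith
    calc ‖y‖ = Real.sqrt (‖y‖ ^ 2) := (Real.sqrt_sq (norm_nonneg y)).symm
      _ ≤ Real.sqrt (q * (1 - q)) := Real.sqrt_le_sqrt h1
  have hprod : ‖x‖ * ‖y‖ ≤ Real.sqrt (p * (1 - p)) * Real.sqrt (q * (1 - q)) :=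
    mul_le_mul hxb hyb (norm_nonneg y) (Real.sqrt_nonneg _)
  have habs : -(Real.sqrt (p * (1 - p)) * Real.sqrt (q * (1 - q))) ≤ (inner ℂ x y : ℂ).re := by
    have := neg_abs_le ((inner ℂ x y : ℂ).re)
    linarith
  linarith


/-- The Landau–Pollak-type overlap bound, for a pair of POVM effects and a density matrix. -/
lemma lp_bound {Am Bm ρ : Matrix (Fin N) (Fin N) ℂ}
    (hAm : Am.PosSemidef) (hBm : Bm.PosSemidef) (hρ : ρ.PosSemidef)
    (hA1 : (1 - Am).PosSemidef) (hB1 : (1 - Bm).PosSemidef) (htr : ρ.trace = 1) :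
    Real.sqrt ((Am * ρ).trace.re) * Real.sqrt ((Bm * ρ).trace.re)
      - Real.sqrt (1 - (Am * ρ).trace.re) * Real.sqrt (1 - (Bm * ρ).trace.re)
      ≤ ‖psdSqrt Am * psdSqrt Bm‖ := by
  set σ := psdSqrt ρ with hσ
  set a := psdSqrt Am with haa
  set b := psdSqrt Bm with hbb
  have hσh : σᴴ = σ := psdSqrt_hermitian hρ
  have hσσ : σ * σ = ρ := psdSqrt_mul_self hρ
  have haA : a * a = Am := psdSqrt_mul_self hAm
  have hbB : b * b = Bm := psdSqrt_mul_self hBm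
  have haH : aᴴ = a := psdSqrt_hermitian hAm
  have hbH : bᴴ = b := psdSqrt_hermitian hBm
  have hAH : Amᴴ = Am := hAm.isHermitian
  have hBH : Bmᴴ = Bm := hBm.isHermitian
  set p := ((Am * ρ).trace).re with hp
  set q := ((Bm * ρ).trace).re with hq
  have hp0 : 0 ≤ p := trace_mul_psd_re_nonneg hAm hρ
  have hq0 : 0 ≤ q := trace_mul_psd_re_nonneg hBm hρ
  have hptr : (Am * ρ).trace = (p : ℂ) := by
    have h := trace_eq_normsq hAm hρ
    have h2 : p = ‖mvec (a * σ)‖ ^ 2 := trace_re_eq_normsq hAm hρ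
    rw [h, h2]
    push_cast
    ring
  have hqtr : (Bm * ρ).trace = (q : ℂ) := by
    have h := trace_eq_normsq hBm hρ
    have h2 : q = ‖mvec (b * σ)‖ ^ 2 := trace_re_eq_normsq hBm hρ
    rw [h, h2]
    push_cast
    ring
  set ψ := mvec σ with hψdef
  set X := mvec (Am * σ) with hX
  set Y := mvec (Bm * σ) with hY
  have hψ : ‖ψ‖ = 1 := mvec_sigma_norm hρ htr
  have hpX : (inner ℂ ψ X : ℂ) = (p : ℂ) := by
    have h := mvec_inner_sigma 1 Am σ hσh
    rw [one_mul, Matrix.conjTranspose_one, one_mul, hσσ] at h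
    rw [hψdef, hX, h, hptr]
  have hqY : (inner ℂ ψ Y : ℂ) = (q : ℂ) := by
    have h := mvec_inner_sigma 1 Bm σ hσh
    rw [one_mul, Matrix.conjTranspose_one, one_mul, hσσ] at h
    rw [hψdef, hY, h, hqtr]
  have hXn : ‖X‖ ^ 2 ≤ p := by
    have h1 : (‖X‖ ^ 2 : ℝ) = ((Am * Am * ρ).trace).re := by
      have h := mvec_inner_sigma Am Am σ hσh
      rw [hAH, hσσ] at h
      have h2 := inner_self_eq_norm_sq (𝕜 := ℂ) X
      simp only [RCLike.re_to_complex] at h2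
      rw [← h2, hX, h]
    have h3 : p - ((Am * Am * ρ).trace).re = (((Am - Am * Am) * ρ).trace).re := by
      rw [Matrix.sub_mul, Matrix.trace_sub, Complex.sub_re, hp]
    have h4 : 0 ≤ (((Am - Am * Am) * ρ).trace).re :=
      trace_mul_psd_re_nonneg (sub_sq_posSemidef hAm hA1) hρ
    linarith [h1 ▸ (le_refl (‖X‖^2 : ℝ))]
  have hYn : ‖Y‖ ^ 2 ≤ q := by
    have h1 : (‖Y‖ ^ 2 : ℝ) = ((Bm * Bm * ρ).trace).re := by
      have h := mvec_inner_sigma Bm Bm σ hσh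
      rw [hBH, hσσ] at h
      have h2 := inner_self_eq_norm_sq (𝕜 := ℂ) Y
      simp only [RCLike.re_to_complex] at h2
      rw [← h2, hY, h]
    have h3 : q - ((Bm * Bm * ρ).trace).re = (((Bm - Bm * Bm) * ρ).trace).re := by
      rw [Matrix.sub_mul, Matrix.trace_sub, Complex.sub_re, hq]
    have h4 : 0 ≤ (((Bm - Bm * Bm) * ρ).trace).re :=
      trace_mul_psd_re_nonneg (sub_sq_posSemidef hBm hB1) hρ
    linarith [h1 ▸ (le_refl (‖Y‖^2 : ℝ))]
  have hcore := lp_inner_core hψ hpX hXn hqY hYn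
  -- identify ⟪X, Y⟫ with the inner product against the operator a*b
  have hXY : (inner ℂ X Y : ℂ) = (inner ℂ (mvec (a * σ)) (mvec ((a * b) * (b * σ))) : ℂ) := by
    have h1 : (inner ℂ X Y : ℂ) = (Am * Bm * ρ).trace := by
      rw [hX, hY, mvec_inner_sigma _ _ _ hσh, hAH, hσσ]
    have h2 : (inner ℂ (mvec (a * σ)) (mvec (((a * b) * b) * σ)) : ℂ)
        = (aᴴ * ((a * b) * b) * ρ).trace := by
      rw [mvec_inner_sigma _ _ _ hσh, hσσ]
    have h3 : aᴴ * ((a * b) * b) * ρ = Am * Bm * ρ := by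
      rw [haH, ← haA, ← hbB]
      noncomm_ring
    have h4 : ((a * b) * b) * σ = (a * b) * (b * σ) := by rw [mul_assoc]
    rw [h1, ← h3, ← h2, h4]
  have hna : ‖mvec (a * σ)‖ = Real.sqrt p := by
    have h2 : p = ‖mvec (a * σ)‖ ^ 2 := trace_re_eq_normsq hAm hρ
    rw [h2, Real.sqrt_sq (norm_nonneg _)]
  have hnb : ‖mvec (b * σ)‖ = Real.sqrt q := by
    have h2 : q = ‖mvec (b * σ)‖ ^ 2 := trace_re_eq_normsq hBm hρ
    rw [h2, Real.sqrt_sq (norm_nonneg _)]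
  have hbound : (inner ℂ X Y : ℂ).re ≤ Real.sqrt p * (‖a * b‖ * Real.sqrt q) := by
    calc (inner ℂ X Y : ℂ).re ≤ ‖(inner ℂ X Y : ℂ)‖ := Complex.re_le_norm _
      _ = ‖(inner ℂ (mvec (a * σ)) (mvec ((a * b) * (b * σ))) : ℂ)‖ := by rw [hXY]
      _ ≤ ‖mvec (a * σ)‖ * ‖mvec ((a * b) * (b * σ))‖ := by
          have := norm_inner_le_norm (𝕜 := ℂ) (mvec (a * σ)) (mvec ((a * b) * (b * σ)))
          simpa using this
      _ ≤ ‖mvec (a * σ)‖ * (‖a * b‖ * ‖mvec (b * σ)‖) := by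
          apply mul_le_mul_of_nonneg_left (mvec_mul_le _ _) (norm_nonneg _)
      _ = Real.sqrt p * (‖a * b‖ * Real.sqrt q) := by rw [hna, hnb]
  -- final algebra
  set C := ‖a * b‖ with hC
  have hC0 : 0 ≤ C := norm_nonneg _
  have hkey : p * q - Real.sqrt (p * (1 - p)) * Real.sqrt (q * (1 - q))
      ≤ Real.sqrt p * (C * Real.sqrt q) := le_trans hcore hbound
  have hsplit1 : Real.sqrt (p * (1 - p)) = Real.sqrt p * Real.sqrt (1 - p) :=
    Real.sqrt_mul hp0 _
  have hsplit2 : Real.sqrt (q * (1 - q)) = Real.sqrt q * Real.sqrt (1 - q) :=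
    Real.sqrt_mul hq0 _
  have hpq : p * q = (Real.sqrt p * Real.sqrt q) ^ 2 := by
    rw [mul_pow, Real.sq_sqrt hp0, Real.sq_sqrt hq0]
  rcases eq_or_lt_of_le (mul_nonneg (Real.sqrt_nonneg p) (Real.sqrt_nonneg q)) with hz | hz
  · -- √p √q = 0
    rw [← hz]
    have : (0:ℝ) ≤ Real.sqrt (1 - p) * Real.sqrt (1 - q) :=
      mul_nonneg (Real.sqrt_nonneg _) (Real.sqrt_nonneg _)
    linarith
  · rw [hsplit1, hsplit2, hpq] at hkey
    nlinarith [hkey, hz]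


lemma opNorm_nonneg' (M : Matrix (Fin N) (Fin N) ℂ) : 0 ≤ opNorm M := by
  rw [opNorm_eq_norm]; exact norm_nonneg _

lemma opNorm_mul_le' (M M' : Matrix (Fin N) (Fin N) ℂ) :
    opNorm (M * M') ≤ opNorm M * opNorm M' := by
  rw [opNorm_eq_norm, opNorm_eq_norm, opNorm_eq_norm]
  exact Matrix.l2_opNorm_mul M M'

lemma povm_one_sub_posSemidef {M : ℕ} (A : Fin M → Matrix (Fin N) (Fin N) ℂ)
    (hAp : ∀ i, (A i).PosSemidef) (hAs : ∑ i, A i = 1) (i : Fin M) :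
    (1 - A i).PosSemidef := by
  classical
  have h : (1 : Matrix (Fin N) (Fin N) ℂ) - A i = ∑ j ∈ Finset.univ.erase i, A j := by
    rw [sub_eq_iff_eq_add, Finset.sum_erase_add Finset.univ A (Finset.mem_univ i), hAs]
  rw [h]
  exact Finset.sum_induction A Matrix.PosSemidef (fun a b ha hb => ha.add hb)
    Matrix.PosSemidef.zero (fun j _ => hAp j)

lemma prob_le_sq_opNorm {Mm ρ : Matrix (Fin N) (Fin N) ℂ} (hM : Mm.PosSemidef)
    (hρ : ρ.PosSemidef) (htr : ρ.trace = 1) :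
    ((Mm * ρ).trace).re ≤ opNorm (psdSqrt Mm) ^ 2 := by
  rw [trace_re_eq_normsq hM hρ, opNorm_eq_norm]
  have h := mvec_mul_le (psdSqrt Mm) (psdSqrt ρ)
  rw [mvec_sigma_norm hρ htr, mul_one] at h
  exact pow_le_pow_left₀ (norm_nonneg _) h 2

lemma opNorm_psdSqrt_le_one {Mm : Matrix (Fin N) (Fin N) ℂ} (hM : Mm.PosSemidef)
    (hM1 : (1 - Mm).PosSemidef) : opNorm (psdSqrt Mm) ≤ 1 := by
  rw [opNorm_eq_norm]
  apply opNorm_le_one_of_contraction (psdSqrt_posSemidef hM)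
  rw [psdSqrt_mul_self hM]
  exact hM1

/-- Version of the Landau–Pollak bound phrased with `opNorm`. -/
lemma lp_bound' {Am Bm ρ : Matrix (Fin N) (Fin N) ℂ}
    (hAm : Am.PosSemidef) (hBm : Bm.PosSemidef) (hρ : ρ.PosSemidef)
    (hA1 : (1 - Am).PosSemidef) (hB1 : (1 - Bm).PosSemidef) (htr : ρ.trace = 1) :
    Real.sqrt ((Am * ρ).trace.re) * Real.sqrt ((Bm * ρ).trace.re)
      - Real.sqrt (1 - (Am * ρ).trace.re) * Real.sqrt (1 - (Bm * ρ).trace.re)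
      ≤ opNorm (psdSqrt Am * psdSqrt Bm) := by
  rw [opNorm_eq_norm]
  exact lp_bound hAm hBm hρ hA1 hB1 htr

end MatrixAux

section EntropyMore

lemma EntropicPair.D_eq (e : EntropicPair) (θ : ℝ) : e.D θ = e.Hmin (Real.cos θ ^ 2) := rfl

lemma EntropicPair.D_arccos_sqrt (e : EntropicPair) {P : ℝ} (h0 : 0 ≤ P) (h1 : P ≤ 1) :
    e.D (Real.arccos (Real.sqrt P)) = e.Hmin P := by
  rw [e.D_eq, Real.cos_arccos (by linarith [Real.sqrt_nonneg P]) (Real.sqrt_le_one.mpr h1), Real.sq_sqrt h0]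

lemma EntropicPair.D_mono (e : EntropicPair) {θ₁ θ₂ : ℝ} (h0 : 0 ≤ θ₁) (h12 : θ₁ ≤ θ₂)
    (h2 : θ₂ ≤ Real.pi) (hpos : 0 < Real.cos θ₂) : e.D θ₁ ≤ e.D θ₂ := by
  rw [e.D_eq, e.D_eq]
  exact e.Hmin_mono (by positivity)
    (pow_le_pow_left₀ hpos.le (Real.cos_le_cos_of_nonneg_of_le_pi h0 h2 h12) 2)
    (Real.cos_sq_le_one θ₁)

end EntropyMore



/-- For any pair of POVMs `A`, `B` on `ℂ^N`, any density operator `ρ`,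
and any two entropic functional pairs, the sum of Salicrú entropies is bounded below by
the bound `B(c_A, c_B, c_{A,B})` of Eq. (10) of the paper. -/
theorem general_entropic_uncertainty_relation
    {N NA NB : ℕ} (hNA : 0 < NA) (hNB : 0 < NB)
    (A : Fin NA → Matrix (Fin N) (Fin N) ℂ) (B : Fin NB → Matrix (Fin N) (Fin N) ℂ)
    (hA : IsPOVM A) (hB : IsPOVM B)
    (ρ : Matrix (Fin N) (Fin N) ℂ) (hρ : IsDensityOp ρ)
    (eA eB : EntropicPair)
    (γA γB γAB : ℝ)
    (hγA : γA = Real.arccos (covA A)) (hγB : γB = Real.arccos (covA B))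
    (hγAB : γAB = Real.arccos (covAB A B)) :
    eA.H (probVec A ρ) + eB.H (probVec B ρ) ≥
      if γAB ≤ γA + γB then eA.D γA + eB.D γB
      else sInf ((fun θ => eA.D θ + eB.D (γAB - θ)) '' Set.Icc γA (γAB - γB)) := by
  classical
  obtain ⟨hAp, hAs⟩ := hA
  obtain ⟨hBp, hBs⟩ := hB
  obtain ⟨hρp, hρt⟩ := hρ
  -- `N = 0` is impossible since the trace of `ρ` is `1`
  rcases Nat.eq_zero_or_pos N with hN0 | hN0
  · exfalso
    subst hN0
    rw [Matrix.trace] at hρt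
    simp at hρt
  set pA := probVec A ρ with hpAdef
  set pB := probVec B ρ with hpBdef
  -- probability vector facts
  have hsum_re : ∀ {M : ℕ} (C : Fin M → Matrix (Fin N) (Fin N) ℂ),
      (∀ i, (C i).PosSemidef) → (∑ i, C i = 1) → ∑ i, ((C i * ρ).trace).re = 1 := by
    intro M C hCp hCs
    have h1 : ∑ i, (C i * ρ) = ρ := by rw [← Finset.sum_mul, hCs, one_mul]
    calc ∑ i, ((C i * ρ).trace).re = ((∑ i, (C i * ρ)).trace).re := by
          rw [Matrix.trace_sum, Complex.re_sum]
      _ = (ρ.trace).re := by rw [h1]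
      _ = 1 := by rw [hρt]; rfl
  have hprobA : IsProbVec pA := by
    constructor
    · intro i
      exact trace_mul_psd_re_nonneg (hAp i) hρp
    · exact hsum_re A hAp hAs
  have hprobB : IsProbVec pB := by
    constructor
    · intro i
      exact trace_mul_psd_re_nonneg (hBp i) hρp
    · exact hsum_re B hBp hBs
  -- maximal probabilities
  have : Nonempty (Fin NA) := ⟨⟨0, hNA⟩⟩
  have : Nonempty (Fin NB) := ⟨⟨0, hNB⟩⟩
  obtain ⟨i0, -, hi0⟩ := Finset.exists_max_image Finset.univ pA Finset.univ_nonempty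
  obtain ⟨j0, -, hj0⟩ := Finset.exists_max_image Finset.univ pB Finset.univ_nonempty
  have hi0' : ∀ i, pA i ≤ pA i0 := fun i => hi0 i (Finset.mem_univ i)
  have hj0' : ∀ j, pB j ≤ pB j0 := fun j => hj0 j (Finset.mem_univ j)
  set p := pA i0 with hpdef
  set q := pB j0 with hqdef
  have hp_pos : 0 < p := by
    by_contra h
    push_neg at h
    have hle : ∑ i, pA i ≤ 0 :=
      Finset.sum_nonpos fun i _ => le_trans (hi0' i) h
    rw [hprobA.2] at hle
    linarith
  have hq_pos : 0 < q := by
    by_contra h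
    push_neg at h
    have hle : ∑ j, pB j ≤ 0 :=
      Finset.sum_nonpos fun j _ => le_trans (hj0' j) h
    rw [hprobB.2] at hle
    linarith
  -- overlap facts
  have hcA_ge : ∀ i, opNorm (psdSqrt (A i)) ≤ covA A := fun i =>
    le_ciSup (f := fun i => opNorm (psdSqrt (A i))) (Finite.bddAbove_range _) i
  have hcB_ge : ∀ j, opNorm (psdSqrt (B j)) ≤ covA B := fun j =>
    le_ciSup (f := fun j => opNorm (psdSqrt (B j))) (Finite.bddAbove_range _) j
  have hA1 : ∀ i, (1 - A i).PosSemidef := povm_one_sub_posSemidef A hAp hAs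
  have hB1 : ∀ j, (1 - B j).PosSemidef := povm_one_sub_posSemidef B hBp hBs
  have hcA_le1 : covA A ≤ 1 := ciSup_le fun i => opNorm_psdSqrt_le_one (hAp i) (hA1 i)
  have hcB_le1 : covA B ≤ 1 := ciSup_le fun j => opNorm_psdSqrt_le_one (hBp j) (hB1 j)
  have hcA_0 : 0 ≤ covA A := le_trans (opNorm_nonneg' _) (hcA_ge i0)
  have hcB_0 : 0 ≤ covA B := le_trans (opNorm_nonneg' _) (hcB_ge j0)
  have hpA_le : ∀ i, pA i ≤ covA A ^ 2 := fun i =>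
    le_trans (prob_le_sq_opNorm (hAp i) hρp hρt)
      (pow_le_pow_left₀ (opNorm_nonneg' _) (hcA_ge i) 2)
  have hpB_le : ∀ j, pB j ≤ covA B ^ 2 := fun j =>
    le_trans (prob_le_sq_opNorm (hBp j) hρp hρt)
      (pow_le_pow_left₀ (opNorm_nonneg' _) (hcB_ge j) 2)
  have hcA2_pos : 0 < covA A ^ 2 := lt_of_lt_of_le hp_pos (hpA_le i0)
  have hcB2_pos : 0 < covA B ^ 2 := lt_of_lt_of_le hq_pos (hpB_le j0)
  have hcA2_le1 : covA A ^ 2 ≤ 1 := pow_le_one₀ hcA_0 hcA_le1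
  have hcB2_le1 : covA B ^ 2 ≤ 1 := pow_le_one₀ hcB_0 hcB_le1
  have hp_le1 : p ≤ 1 := le_trans (hpA_le i0) hcA2_le1
  have hq_le1 : q ≤ 1 := le_trans (hpB_le j0) hcB2_le1
  -- the two fixed bounds D(γA) ≤ H_A and D(γB) ≤ H_B
  have hDγA : eA.D γA = eA.Hmin (covA A ^ 2) := by
    rw [hγA, eA.D_eq, Real.cos_arccos (by linarith) hcA_le1]
  have hDγB : eB.D γB = eB.Hmin (covA B ^ 2) := by
    rw [hγB, eB.D_eq, Real.cos_arccos (by linarith) hcB_le1]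
  have hHA_γ : eA.D γA ≤ eA.H pA := by
    rw [hDγA]
    exact eA.Hmin_le_H hprobA hcA2_pos hcA2_le1 hpA_le
  have hHB_γ : eB.D γB ≤ eB.H pB := by
    rw [hDγB]
    exact eB.Hmin_le_H hprobB hcB2_pos hcB2_le1 hpB_le
  by_cases hcase : γAB ≤ γA + γB
  · rw [if_pos hcase]
    have := add_le_add hHA_γ hHB_γ
    linarith
  · rw [if_neg hcase]
    push_neg at hcase
    -- overlap c_{AB}
    have hcAB_ge : opNorm (psdSqrt (A i0) * psdSqrt (B j0)) ≤ covAB A B := by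
      have h1 : opNorm (psdSqrt (A i0) * psdSqrt (B j0))
          ≤ ⨆ j, opNorm (psdSqrt (A i0) * psdSqrt (B j)) :=
        le_ciSup (f := fun j => opNorm (psdSqrt (A i0) * psdSqrt (B j)))
          (Finite.bddAbove_range _) j0
      have h2 : (⨆ j, opNorm (psdSqrt (A i0) * psdSqrt (B j))) ≤ covAB A B :=
        le_ciSup (f := fun i => ⨆ j, opNorm (psdSqrt (A i) * psdSqrt (B j)))
          (Finite.bddAbove_range _) i0
      exact le_trans h1 h2
    have hcAB_le1 : covAB A B ≤ 1 := by
      apply ciSup_le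
      intro i
      apply ciSup_le
      intro j
      calc opNorm (psdSqrt (A i) * psdSqrt (B j))
          ≤ opNorm (psdSqrt (A i)) * opNorm (psdSqrt (B j)) := opNorm_mul_le' _ _
        _ ≤ 1 * 1 := mul_le_mul (opNorm_psdSqrt_le_one (hAp i) (hA1 i))
            (opNorm_psdSqrt_le_one (hBp j) (hB1 j)) (opNorm_nonneg' _) zero_le_one
        _ = 1 := one_mul 1
    have hcAB_0 : 0 ≤ covAB A B := le_trans (opNorm_nonneg' _) hcAB_ge
    -- the angles attached to the maximal probabilities
    set θA := Real.arccos (Real.sqrt p) with hθA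
    set θB := Real.arccos (Real.sqrt q) with hθB
    have hθA_0 : 0 ≤ θA := Real.arccos_nonneg _
    have hθB_0 : 0 ≤ θB := Real.arccos_nonneg _
    have hθA_le : θA ≤ Real.pi / 2 := Real.arccos_le_pi_div_two.mpr (Real.sqrt_nonneg _)
    have hθB_le : θB ≤ Real.pi / 2 := Real.arccos_le_pi_div_two.mpr (Real.sqrt_nonneg _)
    have hcosθA : Real.cos θA = Real.sqrt p :=
      Real.cos_arccos (by linarith [Real.sqrt_nonneg p]) (Real.sqrt_le_one.mpr hp_le1)
    have hcosθB : Real.cos θB = Real.sqrt q :=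
      Real.cos_arccos (by linarith [Real.sqrt_nonneg q]) (Real.sqrt_le_one.mpr hq_le1)
    have hcosθA_pos : 0 < Real.cos θA := by
      rw [hcosθA]; exact Real.sqrt_pos.mpr hp_pos
    have hcosθB_pos : 0 < Real.cos θB := by
      rw [hcosθB]; exact Real.sqrt_pos.mpr hq_pos
    -- entropies dominate D at the maximal-probability angles
    have hDθA : eA.D θA = eA.Hmin p := eA.D_arccos_sqrt hp_pos.le hp_le1
    have hDθB : eB.D θB = eB.Hmin q := eB.D_arccos_sqrt hq_pos.le hq_le1
    have hHA_θ : eA.D θA ≤ eA.H pA := by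
      rw [hDθA]
      exact eA.Hmin_le_H hprobA hp_pos hp_le1 hi0'
    have hHB_θ : eB.D θB ≤ eB.H pB := by
      rw [hDθB]
      exact eB.Hmin_le_H hprobB hq_pos hq_le1 hj0'
    -- γA ≤ θA and γB ≤ θB
    have hγAθA : γA ≤ θA := by
      rw [hγA, hθA]
      apply arccos_antitone
      calc Real.sqrt p ≤ Real.sqrt (covA A ^ 2) := Real.sqrt_le_sqrt (hpA_le i0)
        _ = covA A := Real.sqrt_sq hcA_0
    have hγBθB : γB ≤ θB := by
      rw [hγB, hθB]
      apply arccos_antitone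
      calc Real.sqrt q ≤ Real.sqrt (covA B ^ 2) := Real.sqrt_le_sqrt (hpB_le j0)
        _ = covA B := Real.sqrt_sq hcB_0
    -- Landau–Pollak
    have hLP : γAB ≤ θA + θB := by
      have hlp := lp_bound' (hAp i0) (hBp j0) hρp (hA1 i0) (hB1 j0) hρt
      have hcos : Real.cos (θA + θB)
          = Real.sqrt p * Real.sqrt q - Real.sqrt (1 - p) * Real.sqrt (1 - q) := by
        rw [Real.cos_add, hcosθA, hcosθB, hθA, hθB, Real.sin_arccos, Real.sin_arccos,
          Real.sq_sqrt hp_pos.le, Real.sq_sqrt hq_pos.le]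
      by_contra hlt
      push_neg at hlt
      have hmem1 : θA + θB ∈ Set.Icc 0 Real.pi := by
        constructor
        · linarith
        · linarith
      have hmem2 : γAB ∈ Set.Icc 0 Real.pi := by
        rw [hγAB]
        exact ⟨Real.arccos_nonneg _, Real.arccos_le_pi _⟩
      have h1 : Real.cos γAB < Real.cos (θA + θB) :=
        Real.strictAntiOn_cos hmem1 hmem2 hlt
      rw [hγAB, Real.cos_arccos (by linarith) hcAB_le1] at h1
      rw [hcos] at h1
      have h2 : Real.sqrt p * Real.sqrt q - Real.sqrt (1 - p) * Real.sqrt (1 - q)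
          ≤ covAB A B := le_trans hlp hcAB_ge
      -- note `p = (A i0 * ρ).trace.re` definitionally
      linarith
    -- choose the evaluation point
    have hγA_le : γA ≤ γAB - γB := by linarith
    set θs := max γA (min θA (γAB - γB)) with hθsdef
    have hθs_mem : θs ∈ Set.Icc γA (γAB - γB) := by
      constructor
      · exact le_max_left _ _
      · exact max_le hγA_le (min_le_right _ _)
    have hsInf_le : sInf ((fun θ => eA.D θ + eB.D (γAB - θ)) '' Set.Icc γA (γAB - γB))
        ≤ eA.D θs + eB.D (γAB - θs) := by
      apply csInf_le
      · refine ⟨0, ?_⟩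
        rintro z ⟨θ, -, rfl⟩
        exact add_nonneg (eA.D_nonneg θ) (eB.D_nonneg _)
      · exact ⟨θs, hθs_mem, rfl⟩
    have hγB_0 : 0 ≤ γB := by rw [hγB]; exact Real.arccos_nonneg _
    have hγA_0 : 0 ≤ γA := by rw [hγA]; exact Real.arccos_nonneg _
    have hmain : eA.D θs + eB.D (γAB - θs) ≤ eA.H pA + eB.H pB := by
      rcases le_or_gt θA (γAB - γB) with hsplit | hsplit
      · -- θs = θA
        have hθs_eq : θs = θA := by
          rw [hθsdef, min_eq_left hsplit, max_eq_right hγAθA]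
        rw [hθs_eq]
        have h1 : eB.D (γAB - θA) ≤ eB.D θB := by
          apply eB.D_mono
          · linarith
          · linarith
          · linarith [Real.pi_pos]
          · exact hcosθB_pos
        have h2 : eB.D (γAB - θA) ≤ eB.H pB := le_trans h1 hHB_θ
        linarith
      · -- θs = γAB - γB
        have hθs_eq : θs = γAB - γB := by
          rw [hθsdef, min_eq_right hsplit.le, max_eq_right hγA_le]
        rw [hθs_eq]
        have h1 : eA.D (γAB - γB) ≤ eA.D θA := by
          apply eA.D_mono
          · linarith
          · exact hsplit.le
          · linarith [Real.pi_pos]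
          · exact hcosθA_pos
        have h2 : eA.D (γAB - γB) ≤ eA.H pA := le_trans h1 hHA_θ
        have h3 : γAB - (γAB - γB) = γB := by ring
        rw [h3]
        linarith
    exact le_trans hsInf_le hmain
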